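/- Let A be the algebra generated by a with every word containing two or more subwords a² equal to zero, and let T be a fixed arrangement of parentheses such that P_n^T(A) ≠ 0. Then for 1 ≤ i, j ≤ n−2 the highest weight vectors g_i(x₁,x₂) = (x̄₁x₁)T_{1,x₁}⋯T_{i−1,x₁} T̄_{i,x₂} T_{i+1,x₁}⋯T_{n−2,x₁} and g_j(x₁,x₂) (defined analogously) are linearly dependent modulo Id(A): under every nonzero evaluation in A they take the same value. -/

import Mathlib

noncomputable section

open Filter Topology

/-- Is a free-magma element a single leaf? -/
def FreeMagma.isLeaf {X : Type*} : FreeMagma X → Bool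
  | .of _ => true
  | .mul _ _ => false

/-- The number of occurrences of the subword `a·a` in a monomial in one generator `a`. -/
def countSq : FreeMagma Unit → ℕ
  | .of _ => 0
  | .mul x y => countSq x + countSq y + (if x.isLeaf && y.isLeaf then 1 else 0)

variable (F : Type) [Field F] [CharZero F]

/-- The free nonassociative (non-unital) algebra on one generator `a`. -/
abbrev FA := FreeNonUnitalNonAssocAlgebra F Unit

/-- The monomial of `FA F` corresponding to a magma word. -/
def mono (m : FreeMagma Unit) : FA F := MonoidAlgebra.single m (1 : F)

/-- The relations ideal of `A`: the span of all monomials containing two or more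
subwords equal to `a²`.  The algebra `A` of the paper is `FA F` modulo `relI F`. -/
def relI : Submodule F (FA F) :=
  Submodule.span F {x : FA F | ∃ m : FreeMagma Unit, 2 ≤ countSq m ∧ x = mono F m}

/-- Number of occurrences of the variable `i` in a magma word over `ℕ`. -/
def occ : FreeMagma ℕ → ℕ → ℕ
  | .of j, i => if j = i then 1 else 0
  | .mul x y, i => occ x i + occ y i

/-- The free nonassociative algebra on countably many variables `x₀, x₁, …`. -/
abbrev FreeN := FreeNonUnitalNonAssocAlgebra F ℕ

/-- The monomial of `FreeN F` corresponding to a magma word. -/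
def monoN (t : FreeMagma ℕ) : FreeN F := MonoidAlgebra.single t (1 : F)

/-- `P_n`: the space of multilinear polynomials in the variables `x₀, …, x_{n-1}`. -/
def Pmulti (n : ℕ) : Submodule F (FreeN F) :=
  Submodule.span F {x : FreeN F | ∃ t : FreeMagma ℕ,
    (∀ i : ℕ, occ t i = if i < n then 1 else 0) ∧ x = monoN F t}

/-- The identities of the algebra `A = FA F / relI F`: polynomials vanishing under every
substitution of elements of `A`. -/
def IdA : Submodule F (FreeN F) :=
  ⨅ xs : ℕ → FA F,
    Submodule.comap (FreeNonUnitalNonAssocAlgebra.lift F xs : FreeN F →ₗ[F] FA F) (relI F)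

/-- The `n`-th codimension of `A`: the dimension of `P_n/(P_n ∩ Id(A))`. -/
def codimA (n : ℕ) : ℕ :=
  Module.finrank F (↥(Pmulti F n) ⧸ Submodule.comap (Pmulti F n).subtype (IdA F))

/-- Apply a list of (operator letter, argument) pairs to a magma word, left-to-right:
letter `0` is left multiplication by the argument, letter `1` is right multiplication. -/
def chainArgs : FreeMagma ℕ → List (Fin 2 × FreeMagma ℕ) → FreeMagma ℕ
  | t, [] => t
  | t, (b, x) :: r => chainArgs (if b = 1 then t * x else x * t) r

/-- The monomial `(u·x₀)T₁,x₀ ⋯ T_{i},v ⋯ T_{n-2},x₀` (the `i`-th operator, 0-indexed,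
takes the argument `v`, all others take `x₀`). -/
def giMono (T : List (Fin 2)) (i : ℕ) (u v : FreeMagma ℕ) : FreeMagma ℕ :=
  chainArgs (u * FreeMagma.of 0)
    (T.zip ((List.range T.length).map fun k => if k = i then v else FreeMagma.of 0))

/-- The highest weight vector `g_i(x₀,x₁)`, alternating in the first occurrence of `x₀`
and the occurrence of `x₁` at operator position `i`. -/
def gPoly (T : List (Fin 2)) (i : ℕ) : FreeN F :=
  monoN F (giMono T i (FreeMagma.of 0) (FreeMagma.of 1)) -
    monoN F (giMono T i (FreeMagma.of 1) (FreeMagma.of 0))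

/-- The generic multilinear monomial `x₀x₁ T₁,x₂ ⋯ T_{n-2},x_{n-1}` with arrangement `T`. -/
def genericMono (T : List (Fin 2)) : FreeMagma ℕ :=
  chainArgs (FreeMagma.of 0 * FreeMagma.of 1)
    (T.zip ((List.range T.length).map fun k => FreeMagma.of (k + 2)))

-- Auxiliary lemmas


theorem countSq_mul (x y : FreeMagma Unit) :
    countSq (x * y) = countSq x + countSq y + (if x.isLeaf && y.isLeaf then 1 else 0) := rfl

theorem one_le_countSq : ∀ x : FreeMagma Unit, x.isLeaf = false → 1 ≤ countSq x := by
  intro x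
  induction x with
  | ih1 u => intro h; simp [FreeMagma.isLeaf] at h
  | ih2 a b iha ihb =>
    intro _
    rw [countSq_mul]
    by_cases ha : a.isLeaf = true
    · by_cases hb : b.isLeaf = true
      · simp [ha, hb]
      · have := ihb (by simpa using hb)
        omega
    · have := iha (by simpa using ha)
      omega

theorem one_le_countSq_mul (x y : FreeMagma Unit) : 1 ≤ countSq (x * y) :=
  one_le_countSq (x * y) rfl

/-- Span of monomials whose magma word satisfies `P`. -/
def spanOf (P : FreeMagma Unit → Prop) : Submodule F (FA F) :=
  Submodule.span F {x : FA F | ∃ m : FreeMagma Unit, P m ∧ x = mono F m}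

theorem relI_eq_spanOf : relI F = spanOf F (fun m => 2 ≤ countSq m) := rfl

theorem mem_spanOf (P : FreeMagma Unit → Prop) (x : FA F)
    (hx : ∀ m ∈ x.coeff.support, P m) : x ∈ spanOf F P := by
  have hx' : x = MonoidAlgebra.ofCoeff (x.coeff.sum fun m r => Finsupp.single m r) := by
    rw [Finsupp.sum_single]
  rw [hx', MonoidAlgebra.ofCoeff_finsuppSum]
  refine Submodule.finsuppSum_mem _ _ _ _ fun m hm => ?_
  have : MonoidAlgebra.ofCoeff (Finsupp.single m (x.coeff m)) = (x.coeff m) • mono F m := by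
    rw [mono, MonoidAlgebra.smul_single', mul_one]; rfl
  rw [this]
  exact Submodule.smul_mem _ _ (Submodule.subset_span ⟨m, hx m (Finsupp.mem_support_iff.mpr hm), rfl⟩)

theorem mem_spanOf_top (x : FA F) : x ∈ spanOf F (fun _ => True) :=
  mem_spanOf F _ x fun _ _ => trivial

theorem mul_spanOf {P Q R : FreeMagma Unit → Prop}
    (h : ∀ m m', P m → Q m' → R (m * m'))
    {x y : FA F} (hx : x ∈ spanOf F P) (hy : y ∈ spanOf F Q) :
    x * y ∈ spanOf F R := by
  induction hx using Submodule.span_induction with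
  | mem x hxm =>
    obtain ⟨m, hPm, rfl⟩ := hxm
    induction hy using Submodule.span_induction with
    | mem y hym =>
      obtain ⟨m', hQm', rfl⟩ := hym
      refine Submodule.subset_span ⟨m * m', h m m' hPm hQm', ?_⟩
      rw [mono, mono, mono, MonoidAlgebra.single_mul_single, one_mul]
    | zero => rw [mul_zero]; exact Submodule.zero_mem _
    | add y z _ _ hy hz => rw [mul_add]; exact Submodule.add_mem _ hy hz
    | smul c y _ hy => rw [mul_smul_comm]; exact Submodule.smul_mem _ _ hy
  | zero => rw [zero_mul]; exact Submodule.zero_mem _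
  | add x z _ _ hx hz => rw [add_mul]; exact Submodule.add_mem _ hx hz
  | smul c x _ hx => rw [smul_mul_assoc]; exact Submodule.smul_mem _ _ hx

/-- The span of monomials with at least one square. -/
def Ksub : Submodule F (FA F) := spanOf F (fun m => 1 ≤ countSq m)

theorem mul_mem_K (x y : FA F) : x * y ∈ Ksub F :=
  mul_spanOf F (fun m m' _ _ => one_le_countSq_mul m m')
    (mem_spanOf_top F x) (mem_spanOf_top F y)

theorem K_mul_K {x y : FA F} (hx : x ∈ Ksub F) (hy : y ∈ Ksub F) : x * y ∈ relI F := by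
  rw [relI_eq_spanOf]
  refine mul_spanOf F (fun m m' hm hm' => ?_) hx hy
  rw [countSq_mul]; omega

theorem relI_mul {x : FA F} (hx : x ∈ relI F) (y : FA F) : x * y ∈ relI F := by
  rw [relI_eq_spanOf] at hx ⊢
  refine mul_spanOf F (fun m m' hm _ => ?_) hx (mem_spanOf_top F y)
  rw [countSq_mul]; omega

theorem mul_relI {x : FA F} (hx : x ∈ relI F) (y : FA F) : y * x ∈ relI F := by
  rw [relI_eq_spanOf] at hx ⊢
  refine mul_spanOf F (fun m m' _ hm' => ?_) (mem_spanOf_top F y) hx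
  rw [countSq_mul]; omega

/-- The basis monomial `a`. -/
def la : FA F := mono F (FreeMagma.of ())

/-- The coefficient of `a` in an element of `FA F`. -/
def coeffA (x : FA F) : F := x.coeff (FreeMagma.of ())

theorem decompA (x : FA F) : x - coeffA F x • la F ∈ Ksub F := by
  refine mem_spanOf F _ _ fun m hm => ?_
  rw [Finsupp.mem_support_iff] at hm
  match m with
  | .of u =>
    exfalso; apply hm
    have : (FreeMagma.of u : FreeMagma Unit) = FreeMagma.of () := by cases u; rfl
    rw [this]
    simp only [coeffA, la, mono, MonoidAlgebra.smul_single', mul_one]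
    rw [MonoidAlgebra.coeff_sub, MonoidAlgebra.coeff_single, Finsupp.sub_apply, Finsupp.single_eq_same, sub_self]
  | .mul a b => exact one_le_countSq_mul a b

theorem mul_decomp (k X : FA F) (hk : k ∈ Ksub F) :
    k * X - coeffA F X • (k * la F) ∈ relI F := by
  have : k * X - coeffA F X • (k * la F) = k * (X - coeffA F X • la F) := by
    rw [mul_sub, mul_smul_comm]
  rw [this]
  exact K_mul_K F hk (decompA F X)

theorem decomp_mul (k X : FA F) (hk : k ∈ Ksub F) :
    X * k - coeffA F X • (la F * k) ∈ relI F := by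
  have : X * k - coeffA F X • (la F * k) = (X - coeffA F X • la F) * k := by
    rw [sub_mul, smul_mul_assoc]
  rw [this]
  exact K_mul_K F (decompA F X) hk

-- chain machinery

def evalChain : FA F → List (Fin 2 × FA F) → FA F
  | t, [] => t
  | t, (b, x) :: r => evalChain (if b = 1 then t * x else x * t) r

def chainA : FA F → List (Fin 2) → FA F
  | t, [] => t
  | t, b :: r => chainA (if b = 1 then t * la F else la F * t) r

theorem evalChain_add : ∀ (l : List (Fin 2 × FA F)) (t s : FA F),
    evalChain F (t + s) l = evalChain F t l + evalChain F s l
  | [], t, s => rfl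
  | (b, x) :: r, t, s => by
    show evalChain F _ r = evalChain F _ r + evalChain F _ r
    rw [← evalChain_add r]
    congr 1
    split <;> [rw [add_mul]; rw [mul_add]]

theorem evalChain_smul : ∀ (l : List (Fin 2 × FA F)) (c : F) (t : FA F),
    evalChain F (c • t) l = c • evalChain F t l
  | [], c, t => rfl
  | (b, x) :: r, c, t => by
    show evalChain F _ r = c • evalChain F _ r
    rw [← evalChain_smul r]
    congr 1
    split <;> [rw [smul_mul_assoc]; rw [mul_smul_comm]]

theorem evalChain_relI : ∀ (l : List (Fin 2 × FA F)) (t : FA F),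
    t ∈ relI F → evalChain F t l ∈ relI F
  | [], t, ht => ht
  | (b, x) :: r, t, ht => by
    refine evalChain_relI r _ ?_
    split <;> [exact relI_mul F ht x; exact mul_relI F ht x]

theorem chainA_mem_K : ∀ (l : List (Fin 2)) (t : FA F), t ∈ Ksub F → chainA F t l ∈ Ksub F
  | [], t, ht => ht
  | b :: r, t, ht => by
    refine chainA_mem_K r _ ?_
    split <;> exact mul_mem_K F _ _

theorem chain_key : ∀ (l : List (Fin 2 × FA F)) (t : FA F), t ∈ Ksub F →
    evalChain F t l - ((l.map (fun p => coeffA F p.2)).prod) • chainA F t (l.map Prod.fst)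
      ∈ relI F
  | [], t, ht => by simp [evalChain, chainA]
  | (b, X) :: r, t, ht => by
    set t' : FA F := if b = 1 then t * X else X * t with ht'
    set t'' : FA F := if b = 1 then t * la F else la F * t with ht''
    have hstep : t' - coeffA F X • t'' ∈ relI F := by
      rw [ht', ht'']
      split
      · exact mul_decomp F t X ht
      · exact decomp_mul F t X ht
    have ht''K : t'' ∈ Ksub F := by rw [ht'']; split <;> exact mul_mem_K F _ _
    have hIH := chain_key r t'' ht''K
    have e1 : evalChain F t ((b, X) :: r) = evalChain F t' r := rfl
    have e2 : evalChain F t' r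
        = evalChain F (t' - coeffA F X • t'') r + coeffA F X • evalChain F t'' r := by
      rw [← evalChain_smul, ← evalChain_add]
      congr 1; abel
    have e3 : chainA F t (((b, X) :: r).map Prod.fst) = chainA F t'' (r.map Prod.fst) := rfl
    rw [e1, e2, e3, List.map_cons, List.prod_cons]
    have : evalChain F (t' - coeffA F X • t'') r
        + coeffA F X • evalChain F t'' r
        - (coeffA F X * (r.map (fun p => coeffA F p.2)).prod) • chainA F t'' (r.map Prod.fst)
        = evalChain F (t' - coeffA F X • t'') r
          + coeffA F X • (evalChain F t'' r
            - (r.map (fun p => coeffA F p.2)).prod • chainA F t'' (r.map Prod.fst)) := by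
      rw [smul_sub, smul_smul]; abel
    rw [this]
    exact Submodule.add_mem _ (evalChain_relI F r _ hstep) (Submodule.smul_mem _ _ hIH)




theorem monoN_mul (s t : FreeMagma ℕ) : monoN F (s * t) = monoN F s * monoN F t := by
  rw [monoN, monoN, monoN, MonoidAlgebra.single_mul_single, one_mul]

theorem lift_chain (xs : ℕ → FA F) :
    ∀ (l : List (Fin 2 × FreeMagma ℕ)) (t : FreeMagma ℕ),
    FreeNonUnitalNonAssocAlgebra.lift F xs (monoN F (chainArgs t l))
      = evalChain F (FreeNonUnitalNonAssocAlgebra.lift F xs (monoN F t))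
          (l.map fun p => (p.1, FreeNonUnitalNonAssocAlgebra.lift F xs (monoN F p.2)))
  | [], t => rfl
  | (b, x) :: r, t => by
    show FreeNonUnitalNonAssocAlgebra.lift F xs
        (monoN F (chainArgs (if b = 1 then t * x else x * t) r)) = _
    rw [lift_chain xs r]
    simp only [List.map_cons]
    show _ = evalChain F
        (if b = 1 then
          FreeNonUnitalNonAssocAlgebra.lift F xs (monoN F t)
            * FreeNonUnitalNonAssocAlgebra.lift F xs (monoN F x)
        else
          FreeNonUnitalNonAssocAlgebra.lift F xs (monoN F x)
            * FreeNonUnitalNonAssocAlgebra.lift F xs (monoN F t))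
        (r.map fun p => (p.1, FreeNonUnitalNonAssocAlgebra.lift F xs (monoN F p.2)))
    congr 1
    by_cases hb : b = 1 <;> simp [hb, monoN_mul, map_mul]

theorem prod_range_if (bp bq : F) : ∀ (L i : ℕ), i < L →
    (((List.range L).map fun k => if k = i then bq else bp)).prod = bq * bp ^ (L - 1)
  | 0, i, h => absurd h (by omega)
  | L + 1, i, h => by
    rw [List.range_succ, List.map_append, List.prod_append]
    rcases Nat.lt_or_ge i L with hiL | hiL
    · rw [prod_range_if bp bq L i hiL]
      have : i ≠ L := Nat.ne_of_lt hiL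
      simp only [List.map_cons, List.map_nil, List.prod_cons, List.prod_nil,
        if_neg (Ne.symm this), mul_one, mul_assoc, ← pow_succ]
      congr 2
      omega
    · have hiL' : i = L := by omega
      subst hiL'
      have : (List.range i).map (fun k => if k = i then bq else bp)
          = (List.range i).map (fun _ => bp) := by
        refine List.map_congr_left fun k hk => ?_
        rw [List.mem_range] at hk
        exact if_neg (Nat.ne_of_lt hk)
      rw [this, List.map_const', List.length_range, List.prod_replicate]
      simp [mul_comm]

theorem eval_gi (xs : ℕ → FA F) (T : List (Fin 2)) (i : ℕ) (hi : i < T.length)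
    (u v : FreeMagma ℕ) :
    FreeNonUnitalNonAssocAlgebra.lift F xs (monoN F (giMono T i u v))
      - (coeffA F (FreeNonUnitalNonAssocAlgebra.lift F xs (monoN F v))
          * coeffA F (FreeNonUnitalNonAssocAlgebra.lift F xs (monoN F (.of 0)))
            ^ (T.length - 1))
        • chainA F (FreeNonUnitalNonAssocAlgebra.lift F xs (monoN F u)
            * FreeNonUnitalNonAssocAlgebra.lift F xs (monoN F (.of 0))) T
      ∈ relI F := by
  have L := FreeNonUnitalNonAssocAlgebra.lift F xs
  rw [giMono, lift_chain, monoN_mul, map_mul]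
  set Lf := FreeNonUnitalNonAssocAlgebra.lift F xs with hLf
  set args := (List.range T.length).map fun k => if k = i then v else FreeMagma.of 0
    with hargs
  have hlen : args.length = T.length := by simp [hargs]
  have hfst : ((T.zip args).map fun p => (p.1, Lf (monoN F p.2))).map Prod.fst = T := by
    rw [List.map_map]
    have : (Prod.fst ∘ fun p : Fin 2 × FreeMagma ℕ => (p.1, Lf (monoN F p.2)))
        = Prod.fst := rfl
    rw [this, List.map_fst_zip (le_of_eq hlen.symm)]
  have hsnd : ((T.zip args).map fun p => (p.1, Lf (monoN F p.2))).map
        (fun p => coeffA F p.2)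
      = args.map fun x => coeffA F (Lf (monoN F x)) := by
    rw [List.map_map]
    have : ((fun p : Fin 2 × FA F => coeffA F p.2)
          ∘ fun p : Fin 2 × FreeMagma ℕ => (p.1, Lf (monoN F p.2)))
        = (fun x => coeffA F (Lf (monoN F x))) ∘ Prod.snd := rfl
    rw [this, ← List.map_map, List.map_snd_zip (le_of_eq hlen)]
  have hprod : (args.map fun x => coeffA F (Lf (monoN F x))).prod
      = coeffA F (Lf (monoN F v))
        * coeffA F (Lf (monoN F (.of 0))) ^ (T.length - 1) := by
    rw [hargs, List.map_map]
    have : ((fun x => coeffA F (Lf (monoN F x)))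
          ∘ fun k => if k = i then v else FreeMagma.of 0)
        = fun k => if k = i then coeffA F (Lf (monoN F v))
            else coeffA F (Lf (monoN F (.of 0))) := by
      funext k; by_cases h : k = i <;> simp [h]
    rw [this, prod_range_if F _ _ _ _ hi]
  have hmain := chain_key F ((T.zip args).map fun p => (p.1, Lf (monoN F p.2)))
      (Lf (monoN F u) * Lf (monoN F (.of 0))) (mul_mem_K F _ _)
  rw [hfst, hsnd, hprod] at hmain
  exact hmain


/-- if `P_n^T(A) ≠ 0` then for all operator positions `i, j` the highest
weight vectors `g_i` and `g_j` are linearly dependent modulo `Id(A)`: every evaluation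
in `A` gives them the same value. -/
theorem gPoly_dependent (n : ℕ) (hn : 3 ≤ n) (T : List (Fin 2)) (hT : T.length = n - 2)
    (hPT : ∃ xs : ℕ → FA F,
      FreeNonUnitalNonAssocAlgebra.lift F xs (monoN F (genericMono T)) ∉ relI F)
    (i j : ℕ) (hi : i < T.length) (hj : j < T.length) :
    ∀ xs : ℕ → FA F,
      FreeNonUnitalNonAssocAlgebra.lift F xs (gPoly F T i) -
        FreeNonUnitalNonAssocAlgebra.lift F xs (gPoly F T j) ∈ relI F := by
  intro xs
  have h1 := eval_gi F xs T i hi (.of 0) (.of 1)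
  have h2 := eval_gi F xs T j hj (.of 0) (.of 1)
  have h3 := eval_gi F xs T i hi (.of 1) (.of 0)
  have h4 := eval_gi F xs T j hj (.of 1) (.of 0)
  have h12 := Submodule.sub_mem _ h1 h2
  have h34 := Submodule.sub_mem _ h3 h4
  rw [sub_sub_sub_cancel_right] at h12 h34
  have hfin := Submodule.sub_mem _ h12 h34
  rw [gPoly, gPoly, map_sub, map_sub, sub_sub_sub_comm]
  exact hfin
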